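/- Let R be a local number ring with maximal ideal 𝔪, residue field k, and normalization R̃ having l distinct maximal ideals. If l ≤ #k, then for every ideal I of R there exists x ∈ I with I·R̃ = x·R̃. -/

import Mathlib

set_option maxHeartbeats 3000000
set_option synthInstance.maxHeartbeats 400000

set_option linter.unusedSectionVars false

open IsLocalRing
open scoped nonZeroDivisors

section core
variable {A B : Type*} (F : Type*) [CommRing A] [IsDedekindDomain A] [CommRing B] [IsDomain B]
  [Field F] [Algebra A F] [IsFractionRing A F] [Algebra B F]
  (g : A →+* B)
  (hι : Function.Injective (algebraMap B F))
  (hg : ∀ a, algebraMap B F (g a) = algebraMap A F a)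

/-- image of an ideal of `B` in `F` as a `B`-submodule -/
noncomputable def ιI (J : Ideal B) : Submodule B F :=
  Submodule.map (Algebra.linearMap B F) J

theorem mem_ιI {J : Ideal B} {y : F} : y ∈ ιI F J ↔ ∃ b ∈ J, algebraMap B F b = y := by
  simp [ιI, Algebra.linearMap_apply]

theorem ιI_mul_le (P Q : Ideal B) : ιI F P * ιI F Q ≤ ιI F (P * Q) := by
  rw [Submodule.mul_le]
  rintro y hy z hz
  obtain ⟨p, hp, rfl⟩ := (mem_ιI F).1 hy
  obtain ⟨q, hq, rfl⟩ := (mem_ιI F).1 hz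
  exact (mem_ιI F).2 ⟨p * q, Ideal.mul_mem_mul hp hq, (map_mul _ _ _)⟩

theorem le_ιI_mul (P Q : Ideal B) : ιI F (P * Q) ≤ ιI F P * ιI F Q := by
  rintro y hy
  obtain ⟨e, he, rfl⟩ := (mem_ιI F).1 hy
  refine Submodule.mul_induction_on he (fun p hp q hq => ?_) (fun a b ha hb => ?_)
  · rw [map_mul]
    exact Submodule.mul_mem_mul ((mem_ιI F).2 ⟨p, hp, rfl⟩) ((mem_ιI F).2 ⟨q, hq, rfl⟩)
  · rw [map_add]; exact Submodule.add_mem _ ha hb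

theorem ιI_mono {P Q : Ideal B} (h : P ≤ Q) : ιI F P ≤ ιI F Q :=
  Submodule.map_mono h
open scoped nonZeroDivisors

include hι hg in
theorem core1 (J : Ideal B) : J ≤ (J.comap g).map g := by
  intro x hx
  set ι := algebraMap B F with hιdef
  set gF := algebraMap A F with hgFdef
  set D : FractionalIdeal A⁰ F := FractionalIdeal.spanSingleton A⁰ (ι x) + 1 with hD
  have hD1 : (1 : FractionalIdeal A⁰ F) ≤ D := by
    rw [hD, ← FractionalIdeal.sup_eq_add]; exact le_sup_right
  have hD0 : D ≠ 0 := fun h =>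
    (one_ne_zero : (1 : FractionalIdeal A⁰ F) ≠ 0) (le_antisymm (h ▸ hD1) (FractionalIdeal.zero_le _))
  have hDinv : D * D⁻¹ = 1 := mul_inv_cancel₀ hD0
  have hDile : D⁻¹ ≤ 1 := by
    have h' := FractionalIdeal.inv_anti_mono (K := F)
      (one_ne_zero : (1 : FractionalIdeal A⁰ F) ≠ 0) hD0 hD1
    rwa [inv_one] at h'
  have hxD : ι x ∈ D := by
    rw [hD, ← FractionalIdeal.sup_eq_add]
    exact Submodule.mem_sup_left (FractionalIdeal.mem_spanSingleton_self _ _)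
  have h1 : (1 : F) ∈ ((D⁻¹ : FractionalIdeal A⁰ F) : Submodule A F) * (D : Submodule A F) := by
    rw [← FractionalIdeal.coe_mul, mul_comm, hDinv, FractionalIdeal.coe_one]
    exact Submodule.mem_one.2 ⟨1, map_one _⟩
  set S : Submodule B F := ιI F ((J.comap g).map g) with hS
  have key : ι x * (1 : F) ∈ S := by
    refine Submodule.mul_induction_on h1 (fun t ht d hd => ?_) (fun a b ha hb => ?_)
    · have htD : t ∈ D⁻¹ := FractionalIdeal.mem_coe.1 ht
      have hdD : d ∈ D := FractionalIdeal.mem_coe.1 hd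
      obtain ⟨at', hat'⟩ := (FractionalIdeal.mem_one_iff _).1 (hDile htD)
      have htx : t * ι x ∈ (1 : FractionalIdeal A⁰ F) := by
        have h' := FractionalIdeal.mul_mem_mul htD hxD
        rwa [mul_comm D⁻¹ D, hDinv] at h'
      obtain ⟨a, haeq⟩ := (FractionalIdeal.mem_one_iff _).1 htx
      have haJ : g a ∈ J := by
        have he : ι (g a) = ι (g at' * x) := by rw [hg, haeq, map_mul, hg, hat']
        rw [hι he]; exact J.mul_mem_left _ hx
      have hd2 : d ∈ (↑(FractionalIdeal.spanSingleton A⁰ (ι x)) : Submodule A F) ⊔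
          (↑(1 : FractionalIdeal A⁰ F) : Submodule A F) := by
        have : d ∈ (↑(FractionalIdeal.spanSingleton A⁰ (ι x) + 1) : Submodule A F) := hD ▸ hd
        rwa [FractionalIdeal.coe_add, Submodule.add_eq_sup] at this
      obtain ⟨d₁, hd₁, d₂, hd₂, rfl⟩ := Submodule.mem_sup.1 hd2
      obtain ⟨c, hc⟩ := (FractionalIdeal.mem_spanSingleton _).1 (FractionalIdeal.mem_coe.1 hd₁)
      obtain ⟨a₂, ha₂⟩ := (FractionalIdeal.mem_one_iff _).1 (FractionalIdeal.mem_coe.1 hd₂)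
      have heq : ι x * (t * (d₁ + d₂)) = ι (g a * (g c * x + g a₂)) := by
        simp only [map_mul, map_add, hg]
        rw [haeq, ← hat', ← hc, ← ha₂, Algebra.smul_def]
        ring
      rw [heq]
      exact (mem_ιI F).2 ⟨_, Ideal.mul_mem_right _ _ (Ideal.mem_map_of_mem g haJ), rfl⟩
    · rw [mul_add]; exact S.add_mem ha hb
  rw [mul_one] at key
  obtain ⟨x', hx', hx'eq⟩ := (mem_ιI F).1 key
  exact hι hx'eq ▸ hx'

include hι hg in
theorem core2 : Function.Injective (fun J : Ideal B => J.comap g) := by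
  intro J₁ J₂ h
  simp only at h
  exact le_antisymm ((core1 F g hι hg J₁).trans (by rw [h]; exact Ideal.map_comap_le))
    ((core1 F g hι hg J₂).trans (by rw [← h]; exact Ideal.map_comap_le))

include hι hg in
theorem core3 (J : Ideal B) (hJ0 : J.comap g ≠ ⊥) :
    ∃ N : Submodule B F, (1 : F) ∈ ιI F J * N ∧ ιI F J * N ≤ ιI F ⊤ := by
  set ι := algebraMap B F
  set gF := algebraMap A F
  set J₀ : Ideal A := J.comap g with hJ₀
  have hJf : (J₀ : FractionalIdeal A⁰ F) ≠ 0 := by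
    simpa using hJ0
  have hJfinv : (J₀ : FractionalIdeal A⁰ F) * (J₀ : FractionalIdeal A⁰ F)⁻¹ = 1 :=
    mul_inv_cancel₀ hJf
  set N : Submodule B F :=
    Submodule.span B ((((J₀ : FractionalIdeal A⁰ F)⁻¹ : FractionalIdeal A⁰ F) : Submodule A F) : Set F) with hN
  have hrange : ∀ y ∈ ιI F (⊤ : Ideal B), ∀ c : B, ι c * y ∈ ιI F (⊤ : Ideal B) := by
    intro y hy c
    obtain ⟨b, -, hb⟩ := (mem_ιI F).1 hy
    exact (mem_ιI F).2 ⟨c * b, trivial, by rw [map_mul, hb]⟩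
  have hprod : ∀ t ∈ (((J₀ : FractionalIdeal A⁰ F)⁻¹ : FractionalIdeal A⁰ F) : Submodule A F),
      ∀ a ∈ J₀, gF a * t ∈ ιI F (⊤ : Ideal B) := by
    intro t ht a haJ₀
    have h1 : gF a ∈ ((J₀ : FractionalIdeal A⁰ F) : Submodule A F) :=
      FractionalIdeal.mem_coe.2 ((FractionalIdeal.mem_coeIdeal _).2 ⟨a, haJ₀, rfl⟩)
    have h2 : gF a * t ∈ ((J₀ : FractionalIdeal A⁰ F) : Submodule A F) *
        (((J₀ : FractionalIdeal A⁰ F)⁻¹ : FractionalIdeal A⁰ F) : Submodule A F) :=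
      Submodule.mul_mem_mul h1 ht
    rw [← FractionalIdeal.coe_mul, hJfinv, FractionalIdeal.coe_one] at h2
    obtain ⟨a', ha'⟩ := Submodule.mem_one.1 h2
    exact (mem_ιI F).2 ⟨g a', trivial, by rw [hg, ha']⟩
  have hmain : ∀ n ∈ N, ∀ b ∈ J, ι b * n ∈ ιI F (⊤ : Ideal B) := by
    intro n hn
    induction hn using Submodule.span_induction with
    | mem t ht =>
      intro b hb
      have hgen : ∀ b' ∈ Ideal.span (g '' (J₀ : Set A)), ι b' * t ∈ ιI F (⊤ : Ideal B) := by
        intro b' hb'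
        induction hb' using Submodule.span_induction with
        | mem y hy =>
          obtain ⟨a, haJ₀, rfl⟩ := hy
          rw [hg]
          exact hprod t ht a haJ₀
        | zero => rw [map_zero, zero_mul]; exact Submodule.zero_mem _
        | add y z _ _ ihy ihz => rw [map_add, add_mul]; exact Submodule.add_mem _ ihy ihz
        | smul c y _ ih =>
          rw [smul_eq_mul, map_mul, mul_assoc]
          exact hrange _ ih c
      exact hgen b (core1 F g hι hg J hb)
    | zero => intro b hb; rw [mul_zero]; exact Submodule.zero_mem _
    | add y z _ _ ihy ihz =>
      intro b hb
      rw [mul_add]; exact Submodule.add_mem _ (ihy b hb) (ihz b hb)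
    | smul c y _ ih =>
      intro b hb
      rw [Algebra.smul_def, ← mul_assoc, mul_comm (ι b) (ι c), mul_assoc]
      exact hrange _ (ih b hb) c
  have h2 : ιI F J * N ≤ ιI F (⊤ : Ideal B) := by
    rw [Submodule.mul_le]
    intro y hy n hn
    obtain ⟨b, hb, rfl⟩ := (mem_ιI F).1 hy
    exact hmain n hn b hb
  have h1 : (1 : F) ∈ ιI F J * N := by
    have h0 : (1 : F) ∈ ((J₀ : FractionalIdeal A⁰ F) : Submodule A F) *
        (((J₀ : FractionalIdeal A⁰ F)⁻¹ : FractionalIdeal A⁰ F) : Submodule A F) := by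
      rw [← FractionalIdeal.coe_mul, hJfinv, FractionalIdeal.coe_one]
      exact Submodule.mem_one.2 ⟨1, map_one _⟩
    refine Submodule.mul_induction_on h0 (fun p hp q hq => ?_) (fun y z hy hz => ?_)
    · obtain ⟨a, haJ₀, rfl⟩ := (FractionalIdeal.mem_coeIdeal _).1 (FractionalIdeal.mem_coe.1 hp)
      refine Submodule.mul_mem_mul ?_ (Submodule.subset_span hq)
      exact (mem_ιI F).2 ⟨g a, haJ₀, hg a⟩
    · exact Submodule.add_mem _ hy hz
  exact ⟨N, h1, h2⟩

include hι hg in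
theorem core5 (J : Ideal B) (hJ0 : J.comap g ≠ ⊥) {M : Ideal B} (hM : M.IsMaximal) :
    ¬ J ≤ M * J := by
  intro hle
  obtain ⟨N, h1, h2⟩ := core3 F g hι hg J hJ0
  have hh : ιI F J * N ≤ ιI F M := by
    calc ιI F J * N ≤ ιI F (M * J) * N := mul_le_mul' (ιI_mono F hle) le_rfl
      _ ≤ (ιI F M * ιI F J) * N := mul_le_mul' (le_ιI_mul F M J) le_rfl
      _ = ιI F M * (ιI F J * N) := mul_assoc _ _ _
      _ ≤ ιI F M * ιI F ⊤ := mul_le_mul' le_rfl h2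
      _ ≤ ιI F (M * ⊤) := ιI_mul_le F M ⊤
      _ = ιI F M := by rw [Ideal.mul_top]
  obtain ⟨m, hm, hmeq⟩ := (mem_ιI F).1 (hh h1)
  have hm1 : m = 1 := hι (by rw [hmeq, map_one])
  exact hM.ne_top ((Ideal.eq_top_iff_one M).2 (hm1 ▸ hm))

include hι hg in
theorem core4 (J : Ideal B) (hJ0 : J.comap g ≠ ⊥) (x : B) (hx : x ∈ J)
    (h : ∀ M : Ideal B, M.IsMaximal → x ∉ M * J) : J = Ideal.span {x} := by
  obtain ⟨N, h1, h2⟩ := core3 F g hι hg J hJ0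
  set ι := algebraMap B F
  set T : Submodule B F := Submodule.span B {ι x} * N with hT
  have hsx : Submodule.span B {ι x} ≤ ιI F J := by
    rw [Submodule.span_le, Set.singleton_subset_iff]
    exact (mem_ιI F).2 ⟨x, hx, rfl⟩
  have hTle : T ≤ ιI F (⊤ : Ideal B) :=
    le_trans (mul_le_mul' hsx le_rfl) h2
  have hassoc : Submodule.span B {ι x} * (ιI F J * N) = T * ιI F J := by
    rw [hT, mul_comm (ιI F J) N, ← mul_assoc]
  set H : Ideal B := Submodule.comap (Algebra.linearMap B F) T with hH
  have hspan : Submodule.span B {ι x} * ιI F (⊤ : Ideal B) ≤ ιI F (Ideal.span {x}) := by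
    rw [Submodule.mul_le]
    intro p hp q hq
    obtain ⟨c, rfl⟩ := Submodule.mem_span_singleton.1 hp
    obtain ⟨b, -, rfl⟩ := (mem_ιI F).1 hq
    refine (mem_ιI F).2 ⟨c * x * b, ?_, ?_⟩
    · exact Ideal.mul_mem_right _ _ (Ideal.mul_mem_left _ _ (Ideal.mem_span_singleton_self x))
    · rw [Algebra.smul_def, map_mul, map_mul]
  have hHtop : H = ⊤ := by
    by_contra hne
    obtain ⟨M, hM, hHM⟩ := Ideal.exists_le_maximal H hne
    refine h M hM ?_
    have hx1 : ι x ∈ T * ιI F J := by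
      have hmem : ι x * 1 ∈ Submodule.span B {ι x} * (ιI F J * N) :=
        Submodule.mul_mem_mul (Submodule.mem_span_singleton_self _) h1
      rw [mul_one, hassoc] at hmem
      exact hmem
    have hTM : T ≤ ιI F M := by
      intro y hy
      obtain ⟨b, -, hb⟩ := (mem_ιI F).1 (hTle hy)
      have hbH : b ∈ H := by
        rw [hH]
        show (Algebra.linearMap B F) b ∈ T
        simpa [Algebra.linearMap_apply, hb] using hy
      exact (mem_ιI F).2 ⟨b, hHM hbH, hb⟩
    have hx2 : ι x ∈ ιI F (M * J) :=
      ιI_mul_le F M J (mul_le_mul' hTM le_rfl hx1)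
    obtain ⟨b, hb, hbeq⟩ := (mem_ιI F).1 hx2
    exact hι hbeq ▸ hb
  have h1T : (1 : F) ∈ T := by
    have : (1 : B) ∈ H := hHtop ▸ Submodule.mem_top
    simpa [hH, Algebra.linearMap_apply] using this
  refine le_antisymm ?_ ?_
  · intro y hy
    have : ι y * 1 ∈ ιI F J * T := Submodule.mul_mem_mul ((mem_ιI F).2 ⟨y, hy, rfl⟩) h1T
    rw [mul_one] at this
    have hle : ιI F J * T ≤ ιI F (Ideal.span {x}) := by
      calc ιI F J * T = Submodule.span B {ι x} * (ιI F J * N) := by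
            rw [hassoc, mul_comm]
        _ ≤ Submodule.span B {ι x} * ιI F (⊤ : Ideal B) := mul_le_mul' le_rfl h2
        _ ≤ ιI F (Ideal.span {x}) := hspan
    obtain ⟨b, hb, hbeq⟩ := (mem_ιI F).1 (hle this)
    exact hι hbeq ▸ hb
  · rw [Ideal.span_le, Set.singleton_subset_iff]; exact hx

include hι hg in
theorem core6 (a : A) (ha : a ≠ 0) (hmem : ∀ M : Ideal B, M.IsMaximal → g a ∈ M) :
    Finite (MaximalSpectrum B) := by
  have hfin : {v : IsDedekindDomain.HeightOneSpectrum A | v.asIdeal ∣ Ideal.span {a}}.Finite :=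
    Ideal.finite_factors (by simpa using ha)
  haveI := hfin.to_subtype
  refine Finite.of_injective (fun M : MaximalSpectrum B =>
    (⟨⟨M.asIdeal.comap g, ?_, ?_⟩, ?_⟩ :
      {v : IsDedekindDomain.HeightOneSpectrum A | v.asIdeal ∣ Ideal.span {a}})) ?_
  · haveI := M.2.isPrime
    exact Ideal.comap_isPrime g M.asIdeal
  · intro hbot
    have hmem' : a ∈ M.asIdeal.comap g := Ideal.mem_comap.2 (hmem M.asIdeal M.2)
    rw [hbot] at hmem'
    exact ha (by simpa using hmem')
  · exact Ideal.dvd_iff_le.2 ((Ideal.span_le).2 (Set.singleton_subset_iff.2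
      (Ideal.mem_comap.2 (hmem M.asIdeal M.2))))
  · intro M₁ M₂ hM
    have : M₁.asIdeal.comap g = M₂.asIdeal.comap g := by
      simpa [IsDedekindDomain.HeightOneSpectrum.ext_iff] using hM
    exact MaximalSpectrum.ext (core2 F g hι hg this)

end core

theorem avoid {R : Type*} [CommRing R] [IsLocalRing R] [Finite (R ⧸ IsLocalRing.maximalIdeal R)]
    (I : Ideal R) (s : Finset (Ideal R))
    (hcard : s.card ≤ Nat.card (R ⧸ IsLocalRing.maximalIdeal R))
    (hW : ∀ W ∈ s, ¬ I ≤ W) :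
    ∃ x ∈ I, ∀ W ∈ s, x ∉ W := by
  classical
  obtain ⟨σ, hσ⟩ := Function.Surjective.hasRightInverse
    (Ideal.Quotient.mk_surjective (I := IsLocalRing.maximalIdeal R))
  induction s using Finset.induction_on with
  | empty => exact ⟨0, I.zero_mem, by simp⟩
  | @insert W₀ t hW₀ ih =>
    have hcard' : t.card + 1 ≤ Nat.card (R ⧸ IsLocalRing.maximalIdeal R) := by
      rwa [Finset.card_insert_of_notMem hW₀] at hcard
    obtain ⟨w, hwI, hw⟩ := ih (le_trans (Nat.le_succ _) hcard')
      (fun W hWt => hW W (Finset.mem_insert_of_mem hWt))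
    by_cases hwW₀ : w ∈ W₀
    · -- need new element
      have hn₀ := hW W₀ (Finset.mem_insert_self _ _)
      obtain ⟨v, hvI, hvW₀⟩ := SetLike.not_le_iff_exists.1 hn₀
      -- candidates v + c * w
      by_contra hcon
      push_neg at hcon
      have hchoice : ∀ c : R ⧸ IsLocalRing.maximalIdeal R,
          ∃ W ∈ t, v + (σ c) * w ∈ W := by
        intro c
        set e := v + (σ c) * w with he
        have heI : e ∈ I := I.add_mem hvI (I.mul_mem_left _ hwI)
        have heW₀ : e ∉ W₀ := by
          intro h
          exact hvW₀ (by simpa [he] using W₀.sub_mem h (W₀.mul_mem_left (σ c) hwW₀))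
        obtain ⟨W, hWmem, hWe⟩ := hcon e heI
        rcases Finset.mem_insert.1 hWmem with h | h
        · exact absurd (h ▸ hWe) heW₀
        · exact ⟨W, h, hWe⟩
      choose f hf₁ hf₂ using hchoice
      have hinj : Function.Injective f := by
        intro c₁ c₂ hc
        by_contra hne
        have hu : IsUnit (σ c₁ - σ c₂) := by
          rw [← IsLocalRing.notMem_maximalIdeal]
          intro hmem
          apply hne
          have hz : (Ideal.Quotient.mk (IsLocalRing.maximalIdeal R)) (σ c₁ - σ c₂) = 0 :=
            Ideal.Quotient.eq_zero_iff_mem.2 hmem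
          rw [map_sub, sub_eq_zero] at hz
          rwa [hσ c₁, hσ c₂] at hz
        have hsub : (σ c₁ - σ c₂) * w ∈ f c₂ := by
          have h1 := hf₂ c₁
          have h2 := hf₂ c₂
          rw [hc] at h1
          have h3 := (f c₂).sub_mem h1 h2
          simpa [sub_mul] using h3
        have hwf : w ∈ f c₂ := by
          obtain ⟨u, hu⟩ := hu
          have h4 := (f c₂).mul_mem_left (↑u⁻¹) hsub
          rwa [← mul_assoc, ← hu, Units.inv_mul, one_mul] at h4
        exact hw _ (hf₁ c₂) hwf
      have : Nat.card (R ⧸ IsLocalRing.maximalIdeal R) ≤ t.card := by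
        have h1 := Nat.card_le_card_of_injective
          (fun c => (⟨f c, hf₁ c⟩ : {W // W ∈ t})) (fun c₁ c₂ h => hinj (by simpa using h))
        simpa [Nat.card_eq_fintype_card] using h1
      omega
    · exact ⟨w, hwI, fun W hWmem => by
        rcases Finset.mem_insert.1 hWmem with h | h
        · exact h ▸ hwW₀
        · exact hw W h⟩

open NumberField in
/-- Let `R` be a local number ring with maximal ideal `𝔪`, finite residue field `k`, and
normalization `R̃` having `l` distinct maximal ideals. If `l ≤ #k`, then for every ideal
`I` of `R` there exists `x ∈ I` with `I·R̃ = x·R̃`. -/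
theorem stmt16 (K : Type*) [Field K] [NumberField K] (R : Subring K) [IsLocalRing ↥R]
    (l : ℕ)
    (hl : Nat.card (MaximalSpectrum ↥(integralClosure ↥R (FractionRing ↥R))) = l)
    (hcard : l ≤ Nat.card (↥R ⧸ IsLocalRing.maximalIdeal ↥R))
    (I : Ideal ↥R) :
    ∃ x ∈ I,
      Ideal.map (algebraMap ↥R ↥(integralClosure ↥R (FractionRing ↥R))) I =
        Ideal.span {algebraMap ↥R ↥(integralClosure ↥R (FractionRing ↥R)) x} := by
  classical
  by_cases hIbot : I = ⊥
  · refine ⟨0, by simp [hIbot], ?_⟩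
    rw [hIbot, Ideal.map_bot, map_zero]
    rw [Ideal.span_singleton_eq_bot.2 rfl]
  let F := FractionRing ↥R
  let emb : F →+* K := IsFractionRing.lift (g := R.subtype) Subtype.val_injective
  haveI : CharZero F := emb.charZero
  let lin : F →ₗ[ℚ] K :=
    { toFun := emb
      map_add' := by intros; simp
      map_smul' := by
        intro q x
        simp only [RingHom.id_apply, Rat.smul_def, map_mul, map_ratCast] }
  haveI : FiniteDimensional ℚ F := FiniteDimensional.of_injective lin emb.injective
  haveI : NumberField F := ⟨⟩
  let B := ↥(integralClosure ↥R F)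
  have hι : Function.Injective (algebraMap B F) := fun x y h => Subtype.ext h
  have htower : ∀ r : ↥R, algebraMap B F (algebraMap ↥R B r) = algebraMap ↥R F r := fun r => rfl
  have hint : ∀ a : 𝓞 F, algebraMap (𝓞 F) F a ∈ integralClosure ↥R F := by
    intro a
    obtain ⟨p, hm, he⟩ := RingOfIntegers.isIntegral_coe a
    refine ⟨p.map (Int.castRingHom ↥R), hm.map _, ?_⟩
    rw [Polynomial.eval₂_map]
    convert he using 2
    · rfl
    · exact Subsingleton.elim _ _
  let g : 𝓞 F →+* B :=
    { toFun := fun a => ⟨algebraMap (𝓞 F) F a, hint a⟩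
      map_one' := Subtype.ext (map_one (algebraMap (𝓞 F) F))
      map_mul' := fun a b => Subtype.ext (map_mul (algebraMap (𝓞 F) F) a b)
      map_zero' := Subtype.ext (map_zero (algebraMap (𝓞 F) F))
      map_add' := fun a b => Subtype.ext (map_add (algebraMap (𝓞 F) F) a b) }
  have hg : ∀ a, algebraMap B F (g a) = algebraMap (𝓞 F) F a := fun _ => rfl
  have hfinj : Function.Injective (algebraMap ↥R B) := by
    intro r r' h
    have h2 := congrArg (algebraMap B F) h
    rw [htower, htower] at h2
    exact IsFractionRing.injective ↥R F h2
  -- the fraction trick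
  have hfrac : ∀ y : B, ∃ a s' : 𝓞 F, g a = y * g s' ∧ (y ≠ 0 → a ≠ 0) := by
    intro y
    obtain ⟨⟨a, s'⟩, hys⟩ := IsLocalization.surj (M := (𝓞 F)⁰) (S := F) (algebraMap B F y)
    refine ⟨a, s'.1, ?_, ?_⟩
    · apply hι
      rw [map_mul, hg, hg]
      exact hys.symm
    · intro hy0 ha0
      rw [ha0, map_zero] at hys
      rcases mul_eq_zero.1 hys with h | h
      · exact hy0 (hι (by rw [h, map_zero]))
      · exact nonZeroDivisors.coe_ne_zero s'
          ((map_eq_zero_iff _ (IsFractionRing.injective (𝓞 F) F)).1 h)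
  by_cases hfield : IsField ↥R
  · -- R is a field, so I = ⊤
    obtain ⟨y, hyI, hy0⟩ := (Submodule.ne_bot_iff I).1 hIbot
    obtain ⟨z, hz⟩ := hfield.mul_inv_cancel hy0
    have hItop : I = ⊤ := Ideal.eq_top_of_isUnit_mem I hyI (IsUnit.of_mul_eq_one _ hz)
    refine ⟨1, by simp [hItop], ?_⟩
    rw [map_one, Ideal.span_singleton_one, hItop]
    rw [Ideal.eq_top_iff_one]
    have h1 := Ideal.mem_map_of_mem (algebraMap ↥R B) (Submodule.mem_top (x := (1 : ↥R)))
    rwa [map_one] at h1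
  -- main case
  have hmne : IsLocalRing.maximalIdeal ↥R ≠ ⊥ := by
    intro h
    exact hfield (IsLocalRing.isField_iff_maximalIdeal_eq.2 h)
  obtain ⟨z, hzm, hz0⟩ := (Submodule.ne_bot_iff _).1 hmne
  haveI : Algebra.IsIntegral ↥R B := integralClosure.AlgebraIsIntegral
  have hcomap : ∀ M : Ideal B, M.IsMaximal →
      Ideal.comap (algebraMap ↥R B) M = IsLocalRing.maximalIdeal ↥R := by
    intro M hM
    haveI := hM
    exact IsLocalRing.eq_maximalIdeal (Ideal.isMaximal_comap_of_isIntegral_of_isMaximal M)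
  have hz0' : algebraMap ↥R B z ≠ 0 := fun h => hz0 (hfinj (by rw [h, map_zero]))
  obtain ⟨a0, s0, ha0eq, ha0ne⟩ := hfrac (algebraMap ↥R B z)
  have ha0 : a0 ≠ 0 := ha0ne hz0'
  have hmem : ∀ M : Ideal B, M.IsMaximal → g a0 ∈ M := by
    intro M hM
    rw [ha0eq]
    refine M.mul_mem_right _ ?_
    have hz' : z ∈ Ideal.comap (algebraMap ↥R B) M := by
      rw [hcomap M hM]; exact hzm
    exact hz'
  haveI hfinB : Finite (MaximalSpectrum B) := core6 F g hι hg a0 ha0 hmem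
  haveI := Fintype.ofFinite (MaximalSpectrum B)
  obtain ⟨M0, hM0⟩ := Ideal.exists_maximal B
  haveI : Nonempty (MaximalSpectrum B) := ⟨⟨M0, hM0⟩⟩
  have hl1 : 1 ≤ l := hl ▸ Nat.card_pos
  haveI hqfin : Finite (↥R ⧸ IsLocalRing.maximalIdeal ↥R) :=
    (Nat.card_pos_iff.1 (lt_of_lt_of_le hl1 hcard)).2
  set J := Ideal.map (algebraMap ↥R B) I with hJ
  have hJne : J.comap g ≠ ⊥ := by
    obtain ⟨y, hyI, hy0⟩ := (Submodule.ne_bot_iff I).1 hIbot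
    have hyB : algebraMap ↥R B y ∈ J := Ideal.mem_map_of_mem _ hyI
    have hyB0 : algebraMap ↥R B y ≠ 0 := fun h => hy0 (hfinj (by rw [h, map_zero]))
    obtain ⟨a, s', haeq, hane⟩ := hfrac (algebraMap ↥R B y)
    intro hbot
    have haJ : a ∈ J.comap g :=
      Ideal.mem_comap.2 (by rw [haeq]; exact J.mul_mem_right _ hyB)
    rw [hbot, Ideal.mem_bot] at haJ
    exact hane hyB0 haJ
  let s : Finset (Ideal ↥R) := Finset.image
    (fun M : MaximalSpectrum B => Ideal.comap (algebraMap ↥R B) ((M.asIdeal * J : Ideal B))) Finset.univ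
  have hscard : s.card ≤ Nat.card (↥R ⧸ IsLocalRing.maximalIdeal ↥R) := by
    calc s.card ≤ (Finset.univ : Finset (MaximalSpectrum B)).card := Finset.card_image_le
      _ = Fintype.card (MaximalSpectrum B) := Finset.card_univ
      _ = Nat.card (MaximalSpectrum B) := Nat.card_eq_fintype_card.symm
      _ = l := hl
      _ ≤ _ := hcard
  have hsW : ∀ W ∈ s, ¬ I ≤ W := by
    intro W hWs
    obtain ⟨M, -, rfl⟩ := Finset.mem_image.1 hWs
    intro hIW
    exact core5 F g hι hg J hJne M.2 (Ideal.map_le_iff_le_comap.2 hIW)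
  obtain ⟨x, hxI, hxW⟩ := avoid I s hscard hsW
  refine ⟨x, hxI, ?_⟩
  refine core4 F g hι hg J hJne (algebraMap ↥R B x) (Ideal.mem_map_of_mem _ hxI) ?_
  intro M hM hxM
  have hWs : Ideal.comap (algebraMap ↥R B) ((M * J : Ideal B)) ∈ s :=
    Finset.mem_image.2 ⟨⟨M, hM⟩, Finset.mem_univ _, rfl⟩
  exact hxW _ hWs (Ideal.mem_comap.2 hxM)
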